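/- For any action A and weight functions w ≤ U pointwise with values in [0,1] and prices p_i ∈ [0,1], the difference f(A,U) − f(A,w) is at most Σ_{i=1}^K (∏_{j<i} (1 − w(a_j,p_j))) · (U(a_i,p_i) − w(a_i,p_i)). (Per-step regret decomposition into observed item-wise UCB gaps.) -/

import Mathlib

noncomputable def waterfallRevenue {K : ℕ} (p u : Fin K → ℝ) : ℝ :=
  ∑ i : Fin K, (∏ j ∈ Finset.univ.filter (fun j => j < i), (1 - u j)) * u i * p i

lemma prod_filter_lt_succ {K : ℕ} (u : Fin (K+1) → ℝ) (i : Fin K) :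
    ∏ j ∈ Finset.univ.filter (fun j => j < i.succ), (1 - u j)
    = (1 - u 0) * ∏ j ∈ Finset.univ.filter (fun j => j < i), (1 - u j.succ) := by
  rw [Finset.prod_filter, Finset.prod_filter, Fin.prod_univ_succ]
  simp [Fin.succ_pos, Fin.succ_lt_succ_iff]

lemma waterfall_rec {K : ℕ} (p u : Fin (K+1) → ℝ) :
    waterfallRevenue p u
      = u 0 * p 0 + (1 - u 0) * waterfallRevenue (p ∘ Fin.succ) (u ∘ Fin.succ) := by
  unfold waterfallRevenue
  rw [Fin.sum_univ_succ, Finset.mul_sum]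
  congr 1
  · simp [Finset.filter_eq_empty_iff]
  · refine Finset.sum_congr rfl fun i _ => ?_
    rw [prod_filter_lt_succ]
    simp only [Function.comp_apply]
    ring

lemma waterfall_nonneg {K : ℕ} (p u : Fin K → ℝ) (hp : ∀ i, 0 ≤ p i)
    (hu : ∀ i, u i ∈ Set.Icc (0 : ℝ) 1) : 0 ≤ waterfallRevenue p u :=
  Finset.sum_nonneg fun i _ =>
    mul_nonneg (mul_nonneg (Finset.prod_nonneg fun j _ => by linarith [(hu j).2])
      (hu i).1) (hp i)

/-- Per-step regret decomposition into observed item-wise UCB gaps. -/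
theorem waterfall_regret_decomposition {K : ℕ} (p w U : Fin K → ℝ)
    (hp : ∀ i, p i ∈ Set.Icc (0 : ℝ) 1)
    (hw : ∀ i, w i ∈ Set.Icc (0 : ℝ) 1)
    (hU : ∀ i, U i ∈ Set.Icc (0 : ℝ) 1)
    (hwU : ∀ i, w i ≤ U i) :
    waterfallRevenue p U - waterfallRevenue p w ≤
      ∑ i : Fin K,
        (∏ j ∈ Finset.univ.filter (fun j => j < i), (1 - w j)) * (U i - w i) := by
  induction K with
  | zero => simp [waterfallRevenue]
  | succ K ih =>
    rw [waterfall_rec, waterfall_rec, Fin.sum_univ_succ]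
    have hsum : ∀ i : Fin K,
        (∏ j ∈ Finset.univ.filter (fun j => j < i.succ), (1 - w j)) * (U i.succ - w i.succ)
        = (1 - w 0) * ((∏ j ∈ Finset.univ.filter (fun j => j < i), (1 - (w ∘ Fin.succ) j))
            * ((U ∘ Fin.succ) i - (w ∘ Fin.succ) i)) := by
      intro i
      rw [prod_filter_lt_succ]
      simp only [Function.comp_apply]
      ring
    simp only [hsum, ← Finset.mul_sum]
    have h0 : (∏ j ∈ Finset.univ.filter (fun j => j < (0 : Fin (K+1))), (1 - w j)) = 1 := by
      simp [Finset.filter_eq_empty_iff]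
    rw [h0]
    set FU := waterfallRevenue (p ∘ Fin.succ) (U ∘ Fin.succ) with hFU
    set FW := waterfallRevenue (p ∘ Fin.succ) (w ∘ Fin.succ) with hFW
    set S := ∑ i : Fin K,
        (∏ j ∈ Finset.univ.filter (fun j => j < i), (1 - (w ∘ Fin.succ) j))
          * ((U ∘ Fin.succ) i - (w ∘ Fin.succ) i) with hS
    have hIH : FU - FW ≤ S :=
      ih (p ∘ Fin.succ) (w ∘ Fin.succ) (U ∘ Fin.succ)
        (fun i => hp _) (fun i => hw _) (fun i => hU _) (fun i => hwU _)
    have hFUnn : 0 ≤ FU :=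
      waterfall_nonneg _ _ (fun i => (hp _).1) (fun i => hU _)
    have h1 : (1 - w 0) * (FU - FW) ≤ (1 - w 0) * S :=
      mul_le_mul_of_nonneg_left hIH (by linarith [(hw 0).2])
    have hgap : 0 ≤ U 0 - w 0 := by linarith [hwU 0]
    have hp0 : p 0 ≤ 1 := (hp 0).2
    nlinarith [mul_nonneg hgap hFUnn, mul_le_mul_of_nonneg_left hp0 hgap]
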